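/- Let λ > 0, c > 0, t > 0, 0 < u < ct, and define p(u,t) = (e^{−λt}/c) [ −λ F(u,t) + (∂F/∂t)(u,t) + (2/λ)(∂²F/∂t²)(u,t) ], where F(u,t) = ∑_{k=0}^∞ (λ/(2c))^{2k} (c²t² − u²)^k / (k!)². Then p(u,t) = e^{−λt} [ (λ/c) · ((c²t² + u²)/(c²t² − u²)) · I₀((λ/c)√(c²t² − u²)) + (1/√(c²t² − u²)) · ((λt(c²t² − u²) − 2(u² + c²t²))/(c²t² − u²)) · I₁((λ/c)√(c²t² − u²)) ]. -/

import Mathlib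

set_option maxHeartbeats 1600000

open scoped Nat

noncomputable def aco (β : ℝ) (k : ℕ) : ℝ := β ^ k / ((k ! : ℝ)) ^ 2
noncomputable def bco (β : ℝ) (k : ℕ) : ℝ := ((k : ℝ) + 1) * aco β (k + 1)

lemma fact_one_le (k : ℕ) : (1 : ℝ) ≤ (k ! : ℝ) := by
  exact_mod_cast Nat.one_le_iff_ne_zero.mpr (Nat.factorial_ne_zero k)

lemma aco_bound (β : ℝ) (hβ : 0 ≤ β) (k : ℕ) : |aco β k| ≤ 1 * β ^ k / k ! := by
  have h1 := fact_one_le k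
  have : |aco β k| = β ^ k / ((k ! : ℝ)) ^ 2 := by
    rw [abs_of_nonneg]; · rfl
    · unfold aco; positivity
  rw [this, one_mul]
  gcongr
  nlinarith

lemma bco_eq (β : ℝ) (k : ℕ) :
    bco β k = β ^ (k + 1) / (((k : ℝ) + 1) * ((k ! : ℝ)) ^ 2) := by
  unfold bco aco
  have h1 := fact_one_le k
  rw [Nat.factorial_succ]
  push_cast
  field_simp

lemma bco_bound (β : ℝ) (hβ : 0 ≤ β) (k : ℕ) : |bco β k| ≤ β * β ^ k / k ! := by
  have h1 := fact_one_le k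
  rw [bco_eq]
  have hnn : (0:ℝ) ≤ β ^ (k+1) / (((k : ℝ) + 1) * ((k ! : ℝ)) ^ 2) := by positivity
  rw [abs_of_nonneg hnn]
  have : β * β ^ k / (k ! : ℝ) = β ^ (k+1) / (k ! : ℝ) := by rw [pow_succ]; ring
  rw [this]
  gcongr
  nlinarith

lemma kbco_bound (β : ℝ) (hβ : 0 ≤ β) (k : ℕ) :
    |(k : ℝ) * bco β k| ≤ β * (2 * β) ^ k / k ! := by
  have h1 := fact_one_le k
  have hk2 : (k : ℝ) ≤ 2 ^ k := by exact_mod_cast Nat.le_of_lt (Nat.lt_two_pow_self (n := k))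
  rw [abs_mul, Nat.abs_cast]
  calc (k : ℝ) * |bco β k| ≤ 2 ^ k * (β * β ^ k / k !) := by
        apply mul_le_mul hk2 (bco_bound β hβ k) (abs_nonneg _) (by positivity)
    _ = β * (2 * β) ^ k / k ! := by rw [mul_pow]; ring

lemma aco_rec (β : ℝ) (k : ℕ) : ((k : ℝ) + 1) ^ 2 * aco β (k + 1) = β * aco β k := by
  unfold aco
  have h1 := fact_one_le k
  rw [Nat.factorial_succ]
  push_cast
  have hk : (0:ℝ) < (k:ℝ) + 1 := by positivity
  field_simp
  ring

lemma summable_pow_coeff (a : ℕ → ℝ) (C r : ℝ)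
    (ha : ∀ k, |a k| ≤ C * r ^ k / k !) (x : ℝ) :
    Summable (fun k => a k * x ^ k) := by
  apply Summable.of_norm
  apply Summable.of_nonneg_of_le (fun k => norm_nonneg _) (fun k => ?_)
    ((Real.summable_pow_div_factorial (r * |x|)).mul_left C)
  have h1 : ‖a k * x ^ k‖ = |a k| * |x| ^ k := by
    rw [Real.norm_eq_abs, abs_mul, abs_pow]
  rw [h1]
  calc |a k| * |x| ^ k ≤ (C * r ^ k / k !) * |x| ^ k :=
        mul_le_mul_of_nonneg_right (ha k) (by positivity)
    _ = C * ((r * |x|) ^ k / k !) := by rw [mul_pow]; ring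

lemma hasDerivAt_tsum_pow (a : ℕ → ℝ) (C r : ℝ)
    (ha : ∀ k, |a k| ≤ C * r ^ k / k !) (x : ℝ) :
    HasDerivAt (fun y => ∑' k : ℕ, a k * y ^ k)
      (∑' k : ℕ, ((k : ℝ) + 1) * a (k + 1) * x ^ k) x := by
  set R : ℝ := |x| + 1 with hRdef
  have hR1 : (1 : ℝ) ≤ R := by simp [hRdef]
  have hR0 : (0 : ℝ) < R := lt_of_lt_of_le one_pos hR1
  have hbound : ∀ (n : ℕ) (y : ℝ), y ∈ Metric.ball (0:ℝ) R →
      ‖a n * ((n : ℝ) * y ^ (n - 1))‖ ≤ C * (2 * r * R) ^ n / n ! := by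
    intro n y hy
    have hyR : |y| < R := by simpa [Real.norm_eq_abs] using hy
    have h1 : ‖a n * ((n : ℝ) * y ^ (n - 1))‖ = |a n| * ((n : ℝ) * |y| ^ (n - 1)) := by
      rw [Real.norm_eq_abs, abs_mul, abs_mul, abs_pow, Nat.abs_cast]
    rw [h1]
    have hyn : |y| ^ (n - 1) ≤ R ^ n := by
      calc |y| ^ (n - 1) ≤ R ^ (n - 1) := pow_le_pow_left₀ (abs_nonneg _) hyR.le _
        _ ≤ R ^ n := pow_le_pow_right₀ hR1 (Nat.sub_le n 1)
    have hn2 : (n : ℝ) ≤ 2 ^ n := by exact_mod_cast Nat.le_of_lt (Nat.lt_two_pow_self (n := n))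
    calc |a n| * ((n : ℝ) * |y| ^ (n - 1))
        ≤ (C * r ^ n / n !) * ((2 : ℝ) ^ n * R ^ n) := by
          apply mul_le_mul (ha n) ?_ (by positivity)
            (le_trans (abs_nonneg _) (ha n))
          exact mul_le_mul hn2 hyn (by positivity) (by positivity)
      _ = C * (2 * r * R) ^ n / n ! := by rw [mul_pow, mul_pow]; ring
  have hu : Summable (fun n : ℕ => C * (2 * r * R) ^ n / n !) := by
    have := (Real.summable_pow_div_factorial (2 * r * R)).mul_left C
    simpa [mul_div_assoc] using this
  have hxball : x ∈ Metric.ball (0:ℝ) R := by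
    simp only [Metric.mem_ball, dist_zero_right, Real.norm_eq_abs, hRdef]
    linarith
  have hder : HasDerivAt (fun y => ∑' k : ℕ, a k * y ^ k)
      (∑' n : ℕ, a n * ((n : ℝ) * x ^ (n - 1))) x :=
    hasDerivAt_tsum_of_isPreconnected hu Metric.isOpen_ball
      (convex_ball (0:ℝ) R).isPreconnected
      (fun n y _ => (hasDerivAt_pow n y).const_mul (a n)) hbound
      (by simpa [Real.norm_eq_abs] using hR0 : (0:ℝ) ∈ Metric.ball (0:ℝ) R)
      (summable_pow_coeff a C r ha 0) hxball
  have hs : Summable (fun n : ℕ => a n * ((n : ℝ) * x ^ (n - 1))) :=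
    Summable.of_norm (Summable.of_nonneg_of_le (fun n => norm_nonneg _)
      (fun n => hbound n x hxball) hu)
  have heq : (∑' n : ℕ, a n * ((n : ℝ) * x ^ (n - 1)))
      = ∑' k : ℕ, ((k : ℝ) + 1) * a (k + 1) * x ^ k := by
    rw [hs.tsum_eq_zero_add]
    simp only [Nat.cast_zero, zero_mul, mul_zero, zero_add, Nat.add_sub_cancel]
    apply tsum_congr
    intro k
    push_cast
    ring
  rwa [heq] at hder

/-- `F(u,t) = ∑_{k=0}^∞ (λ/(2c))^{2k} (c²t² − u²)^k / (k!)²`,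
which equals `I₀((λ/c)√(c²t² − u²))` for `|u| ≤ ct`. -/
noncomputable def F (lam c u t : ℝ) : ℝ :=
  ∑' k : ℕ, (lam / (2 * c)) ^ (2 * k) * (c ^ 2 * t ^ 2 - u ^ 2) ^ k /
    ((Nat.factorial k : ℝ)) ^ 2

/-- The density of the absolutely continuous component of the planar cyclic motion:
`p(u,t) = (e^{−λt}/c)[−λF + ∂F/∂t + (2/λ)∂²F/∂t²]`. -/
noncomputable def planarDensity (lam c u t : ℝ) : ℝ :=
  Real.exp (-(lam * t)) / c *
    (-(lam * F lam c u t) + deriv (fun s => F lam c u s) t +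
      2 / lam * iteratedDeriv 2 (fun s => F lam c u s) t)

/-- The modified Bessel function of the first kind of order zero. -/
noncomputable def besselI0 (x : ℝ) : ℝ :=
  ∑' k : ℕ, (x / 2) ^ (2 * k) / ((Nat.factorial k : ℝ)) ^ 2

/-- The modified Bessel function of the first kind of order one. -/
noncomputable def besselI1 (x : ℝ) : ℝ :=
  ∑' k : ℕ, (x / 2) ^ (2 * k + 1) / ((Nat.factorial k : ℝ) * (Nat.factorial (k + 1) : ℝ))

lemma Ftsum (lam c u σ : ℝ) :
    F lam c u σ = ∑' k : ℕ, aco ((lam / (2 * c)) ^ 2) k * (c ^ 2 * σ ^ 2 - u ^ 2) ^ k := by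
  unfold F aco
  exact tsum_congr fun k => by rw [pow_mul]; ring

lemma FderivAt (lam c u σ : ℝ) :
    HasDerivAt (fun y => F lam c u y)
      ((∑' k : ℕ, bco ((lam / (2 * c)) ^ 2) k * (c ^ 2 * σ ^ 2 - u ^ 2) ^ k) *
        (2 * c ^ 2 * σ)) σ := by
  have hβ : (0:ℝ) ≤ (lam / (2 * c)) ^ 2 := sq_nonneg _
  have hfun : (fun y => F lam c u y)
      = fun y => ∑' k : ℕ, aco ((lam / (2 * c)) ^ 2) k * (c ^ 2 * y ^ 2 - u ^ 2) ^ k :=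
    funext (Ftsum lam c u)
  rw [hfun]
  have houter := hasDerivAt_tsum_pow (aco ((lam / (2 * c)) ^ 2)) 1 ((lam / (2 * c)) ^ 2)
    (aco_bound _ hβ) (c ^ 2 * σ ^ 2 - u ^ 2)
  have hinner : HasDerivAt (fun y : ℝ => c ^ 2 * y ^ 2 - u ^ 2) (2 * c ^ 2 * σ) σ := by
    have h := ((hasDerivAt_pow 2 σ).const_mul (c ^ 2)).sub_const (u ^ 2)
    refine h.congr_deriv ?_
    push_cast; ring
  exact houter.comp σ hinner

lemma Fderiv2At (lam c u t : ℝ) :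
    HasDerivAt (deriv (fun y => F lam c u y))
      ((∑' k : ℕ, ((k : ℝ) + 1) * bco ((lam / (2 * c)) ^ 2) (k + 1) *
          (c ^ 2 * t ^ 2 - u ^ 2) ^ k) * (2 * c ^ 2 * t) * (2 * c ^ 2 * t)
        + (∑' k : ℕ, bco ((lam / (2 * c)) ^ 2) k * (c ^ 2 * t ^ 2 - u ^ 2) ^ k) *
          (2 * c ^ 2)) t := by
  have hβ : (0:ℝ) ≤ (lam / (2 * c)) ^ 2 := sq_nonneg _
  have hfun : deriv (fun y => F lam c u y)
      = fun σ => (∑' k : ℕ, bco ((lam / (2 * c)) ^ 2) k * (c ^ 2 * σ ^ 2 - u ^ 2) ^ k) *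
        (2 * c ^ 2 * σ) :=
    funext fun σ => (FderivAt lam c u σ).deriv
  rw [hfun]
  have houter := hasDerivAt_tsum_pow (bco ((lam / (2 * c)) ^ 2)) ((lam / (2 * c)) ^ 2)
    ((lam / (2 * c)) ^ 2) (bco_bound _ hβ) (c ^ 2 * t ^ 2 - u ^ 2)
  have hinner : HasDerivAt (fun y : ℝ => c ^ 2 * y ^ 2 - u ^ 2) (2 * c ^ 2 * t) t := by
    have h := ((hasDerivAt_pow 2 t).const_mul (c ^ 2)).sub_const (u ^ 2)
    refine h.congr_deriv ?_
    push_cast; ring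
  have hlin : HasDerivAt (fun y : ℝ => 2 * c ^ 2 * y) (2 * c ^ 2) t := by
    simpa using (hasDerivAt_id t).const_mul (2 * c ^ 2)
  have hmul := (houter.comp t hinner).mul hlin
  exact hmul

lemma besselI0_eq (lam c : ℝ) (A : ℝ) (hA : 0 ≤ A) :
    besselI0 (lam / c * Real.sqrt A) = ∑' k : ℕ, aco ((lam / (2 * c)) ^ 2) k * A ^ k := by
  unfold besselI0 aco
  apply tsum_congr
  intro k
  have hz : (lam / c * Real.sqrt A / 2) ^ 2 = (lam / (2 * c)) ^ 2 * A := by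
    have h1 : (lam / c * Real.sqrt A / 2) ^ 2 = (lam / (2 * c)) ^ 2 * Real.sqrt A ^ 2 := by
      ring
    rw [h1, Real.sq_sqrt hA]
  rw [pow_mul, hz, mul_pow]
  ring

lemma besselI1_eq (lam c : ℝ) (hlam : lam ≠ 0) (hc : c ≠ 0) (A : ℝ) (hA : 0 ≤ A) :
    lam / (2 * c) * besselI1 (lam / c * Real.sqrt A)
      = (∑' k : ℕ, bco ((lam / (2 * c)) ^ 2) k * A ^ k) * Real.sqrt A := by
  unfold besselI1
  rw [← tsum_mul_left, ← tsum_mul_right]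
  apply tsum_congr
  intro k
  have hz : (lam / c * Real.sqrt A / 2) ^ 2 = (lam / (2 * c)) ^ 2 * A := by
    have h1 : (lam / c * Real.sqrt A / 2) ^ 2 = (lam / (2 * c)) ^ 2 * Real.sqrt A ^ 2 := by
      ring
    rw [h1, Real.sq_sqrt hA]
  have hzh : lam / c * Real.sqrt A / 2 = lam / (2 * c) * Real.sqrt A := by ring
  rw [pow_succ, pow_mul, hz, hzh, bco_eq, Nat.factorial_succ]
  have hfk : ((k ! : ℝ)) ≠ 0 := by positivity
  have hk1 : ((k : ℝ) + 1) ≠ 0 := by positivity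
  push_cast
  field_simp
  ring_nf
  field_simp

lemma ode_eq (β : ℝ) (hβ : 0 ≤ β) (A : ℝ) :
    A * (∑' k : ℕ, ((k : ℝ) + 1) * bco β (k + 1) * A ^ k)
      + (∑' k : ℕ, bco β k * A ^ k)
      = β * (∑' k : ℕ, aco β k * A ^ k) := by
  have hsum_b : Summable (fun k : ℕ => bco β k * A ^ k) :=
    summable_pow_coeff _ β β (bco_bound β hβ) A
  have hsum_h : Summable (fun k : ℕ => ((k : ℝ) * bco β k) * A ^ k) :=
    summable_pow_coeff _ β (2 * β) (kbco_bound β hβ) A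
  have h1 : A * (∑' k : ℕ, ((k : ℝ) + 1) * bco β (k + 1) * A ^ k)
      = ∑' k : ℕ, ((k : ℝ) * bco β k) * A ^ k := by
    rw [hsum_h.tsum_eq_zero_add]
    simp only [Nat.cast_zero, zero_mul, zero_add]
    rw [← tsum_mul_left]
    apply tsum_congr
    intro k
    push_cast
    ring
  rw [h1, ← hsum_h.tsum_add hsum_b]
  rw [show β * (∑' k : ℕ, aco β k * A ^ k) = ∑' k : ℕ, β * (aco β k * A ^ k) from
    (tsum_mul_left).symm]
  apply tsum_congr
  intro k
  have h := aco_rec β k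
  have hb : (k : ℝ) * bco β k + bco β k = ((k : ℝ) + 1) ^ 2 * aco β (k + 1) := by
    unfold bco; ring
  have h2 : (k : ℝ) * bco β k + bco β k = β * aco β k := by rw [hb, h]
  linear_combination A ^ k * h2

theorem planarDensity_bessel_form
    (lam c t u : ℝ) (hlam : 0 < lam) (hc : 0 < c) (ht : 0 < t)
    (hu0 : 0 < u) (huct : u < c * t) :
    planarDensity lam c u t =
      Real.exp (-(lam * t)) *
        (lam / c * ((c ^ 2 * t ^ 2 + u ^ 2) / (c ^ 2 * t ^ 2 - u ^ 2)) *
            besselI0 (lam / c * Real.sqrt (c ^ 2 * t ^ 2 - u ^ 2)) +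
          1 / Real.sqrt (c ^ 2 * t ^ 2 - u ^ 2) *
            ((lam * t * (c ^ 2 * t ^ 2 - u ^ 2) - 2 * (u ^ 2 + c ^ 2 * t ^ 2)) /
              (c ^ 2 * t ^ 2 - u ^ 2)) *
            besselI1 (lam / c * Real.sqrt (c ^ 2 * t ^ 2 - u ^ 2))) := by
  have hcne : c ≠ 0 := ne_of_gt hc
  have hlne : lam ≠ 0 := ne_of_gt hlam
  have hβ : (0:ℝ) ≤ (lam / (2 * c)) ^ 2 := sq_nonneg _
  have hA : (0:ℝ) < c ^ 2 * t ^ 2 - u ^ 2 := by nlinarith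
  have hs2 : Real.sqrt (c ^ 2 * t ^ 2 - u ^ 2) ^ 2 = c ^ 2 * t ^ 2 - u ^ 2 :=
    Real.sq_sqrt hA.le
  have hs0 : 0 < Real.sqrt (c ^ 2 * t ^ 2 - u ^ 2) := Real.sqrt_pos.mpr hA
  have hd1 : deriv (fun s => F lam c u s) t
      = (∑' k : ℕ, bco ((lam / (2 * c)) ^ 2) k * (c ^ 2 * t ^ 2 - u ^ 2) ^ k) *
        (2 * c ^ 2 * t) := (FderivAt lam c u t).deriv
  have hd2 : iteratedDeriv 2 (fun s => F lam c u s) t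
      = (∑' k : ℕ, ((k : ℝ) + 1) * bco ((lam / (2 * c)) ^ 2) (k + 1) *
          (c ^ 2 * t ^ 2 - u ^ 2) ^ k) * (2 * c ^ 2 * t) * (2 * c ^ 2 * t)
        + (∑' k : ℕ, bco ((lam / (2 * c)) ^ 2) k * (c ^ 2 * t ^ 2 - u ^ 2) ^ k) *
          (2 * c ^ 2) := by
    have h2 : iteratedDeriv 2 (fun s => F lam c u s)
        = deriv (deriv (fun s => F lam c u s)) := by
      rw [show (2:ℕ) = 1 + 1 from rfl, iteratedDeriv_succ, iteratedDeriv_one]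
    rw [h2]
    exact (Fderiv2At lam c u t).deriv
  rw [planarDensity, hd1, hd2, Ftsum lam c u t]
  rw [besselI0_eq lam c (c ^ 2 * t ^ 2 - u ^ 2) hA.le]
  have hI1 := besselI1_eq lam c hlne hcne (c ^ 2 * t ^ 2 - u ^ 2) hA.le
  have hODE := ode_eq ((lam / (2 * c)) ^ 2) hβ (c ^ 2 * t ^ 2 - u ^ 2)
  set G0 := ∑' k : ℕ, aco ((lam / (2 * c)) ^ 2) k * (c ^ 2 * t ^ 2 - u ^ 2) ^ k with hG0
  set G1 := ∑' k : ℕ, bco ((lam / (2 * c)) ^ 2) k * (c ^ 2 * t ^ 2 - u ^ 2) ^ k with hG1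
  set G2 := ∑' k : ℕ, ((k : ℝ) + 1) * bco ((lam / (2 * c)) ^ 2) (k + 1) *
    (c ^ 2 * t ^ 2 - u ^ 2) ^ k with hG2
  set s := Real.sqrt (c ^ 2 * t ^ 2 - u ^ 2) with hsdef
  have hsne : s ≠ 0 := ne_of_gt hs0
  have hI1v : besselI1 (lam / c * s) = 2 * c / lam * (G1 * s) := by
    field_simp at hI1 ⊢
    linarith
  rw [hI1v]
  have hG2v : G2 = ((lam / (2 * c)) ^ 2 * G0 - G1) / (c ^ 2 * t ^ 2 - u ^ 2) := by
    rw [eq_div_iff (ne_of_gt hA)]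
    linarith
  rw [hG2v]
  rw [show c ^ 2 * t ^ 2 - u ^ 2 = s ^ 2 from hs2.symm]
  rw [show u ^ 2 = c ^ 2 * t ^ 2 - s ^ 2 by linarith]
  field_simp
  ring
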